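/- arXiv:math/9810190 — 2 statements merged into one kernel-verified Lean document; each statement's English description precedes it below -/
import Mathlib

section
/- Let G be the group defined by the presentation ⟨u,v,b,r | u²=v², bvbu=b⁻¹ub⁻¹v, u⁻¹b⁻¹vbr=ru⁻¹b⁻¹vb⟩ and let H be the subgroup of G generated by u² and bvbu. Then for every natural number n, the element (bub⁻¹v⁻¹)ⁿ(b⁻¹vbu⁻¹)ⁿ of G lies in H. -/
/-- Generators u, v, b, r of the group G. -/
inductive GenG : Type
  | u | v | b | r
  deriving DecidableEq

/-- Relators of G = ⟨u,v,b,r | u²=v², bvbu=b⁻¹ub⁻¹v, u⁻¹b⁻¹vbr=ru⁻¹b⁻¹vb⟩. -/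
def relsG : Set (FreeGroup GenG) :=
  letI u := FreeGroup.of GenG.u
  letI v := FreeGroup.of GenG.v
  letI b := FreeGroup.of GenG.b
  letI r := FreeGroup.of GenG.r
  { u ^ 2 * (v ^ 2)⁻¹,
    b * v * b * u * (b⁻¹ * u * b⁻¹ * v)⁻¹,
    u⁻¹ * b⁻¹ * v * b * r * (r * u⁻¹ * b⁻¹ * v * b)⁻¹ }

/-- The element u² of G. -/
def h₁ : PresentedGroup relsG := PresentedGroup.of GenG.u ^ 2

/-- The element bvbu of G. -/
def h₂ : PresentedGroup relsG :=
  PresentedGroup.of GenG.b * PresentedGroup.of GenG.v *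
    PresentedGroup.of GenG.b * PresentedGroup.of GenG.u

/-- The subgroup H = ⟨u², bvbu⟩ of G. -/
def H : Subgroup (PresentedGroup relsG) := Subgroup.closure {h₁, h₂}

namespace MemHAux

noncomputable abbrev U : PresentedGroup relsG := PresentedGroup.of GenG.u
noncomputable abbrev V : PresentedGroup relsG := PresentedGroup.of GenG.v
noncomputable abbrev B : PresentedGroup relsG := PresentedGroup.of GenG.b

lemma rel_one {w : FreeGroup GenG} (hw : w ∈ relsG) :
    (QuotientGroup.mk' (Subgroup.normalClosure relsG)) w = 1 := by
  rw [QuotientGroup.mk'_apply, QuotientGroup.eq_one_iff]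
  exact Subgroup.subset_normalClosure hw

lemma e1 : U ^ 2 = V ^ 2 := by
  have h := rel_one (w := FreeGroup.of GenG.u ^ 2 * (FreeGroup.of GenG.v ^ 2)⁻¹)
    (Set.mem_insert _ _)
  rw [map_mul, map_inv, map_pow, map_pow, mul_inv_eq_one] at h
  exact h

lemma e2 : B * V * B * U = B⁻¹ * U * B⁻¹ * V := by
  have h := rel_one (w := FreeGroup.of GenG.b * FreeGroup.of GenG.v * FreeGroup.of GenG.b *
      FreeGroup.of GenG.u *
      ((FreeGroup.of GenG.b)⁻¹ * FreeGroup.of GenG.u * (FreeGroup.of GenG.b)⁻¹ *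
        FreeGroup.of GenG.v)⁻¹)
    (Set.mem_insert_of_mem _ (Set.mem_insert _ _))
  simp only [map_mul, map_inv, mul_inv_eq_one] at h
  exact h

/-- The key element g = h₁ h₂⁻¹. -/
noncomputable def g : PresentedGroup relsG := h₁ * h₂⁻¹

lemma F1 : g * B = B * g⁻¹ := by
  show U ^ 2 * (B * V * B * U)⁻¹ * B = B * (U ^ 2 * (B * V * B * U)⁻¹)⁻¹
  conv_rhs => rw [e2, e1]
  group

lemma F1' : g⁻¹ * B = B * g := by
  calc g⁻¹ * B = g⁻¹ * (B * g⁻¹) * g := by group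
    _ = g⁻¹ * (g * B) * g := by rw [← F1]
    _ = B * g := by group

lemma c3 : g * B⁻¹ = B⁻¹ * g⁻¹ := by
  calc g * B⁻¹ = B⁻¹ * (B * g) * B⁻¹ := by group
    _ = B⁻¹ * (g⁻¹ * B) * B⁻¹ := by rw [← F1']
    _ = B⁻¹ * g⁻¹ := by group

lemma c4 : g⁻¹ * B⁻¹ = B⁻¹ * g := by
  calc g⁻¹ * B⁻¹ = B⁻¹ * (B * g⁻¹) * B⁻¹ := by group
    _ = B⁻¹ * (g * B) * B⁻¹ := by rw [← F1]
    _ = B⁻¹ * g := by group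

lemma hgB2 : Commute g (B * B) := by
  show g * (B * B) = B * B * g
  calc g * (B * B) = (g * B) * B := by group
    _ = (B * g⁻¹) * B := by rw [F1]
    _ = B * (g⁻¹ * B) := by group
    _ = B * (B * g) := by rw [F1']
    _ = B * B * g := by group

lemma Fx : B * U * B⁻¹ * V⁻¹ = B * B * g⁻¹ := by
  show _ = B * B * (U ^ 2 * (B * V * B * U)⁻¹)⁻¹
  conv_rhs => rw [e2, e1]
  group

lemma Fy : B⁻¹ * V * B * U⁻¹ = B⁻¹ * g * B⁻¹ := by
  show _ = B⁻¹ * (U ^ 2 * (B * V * B * U)⁻¹) * B⁻¹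
  conv_rhs => rw [e2, e1]
  group

lemma hxg : Commute (B * U * B⁻¹ * V⁻¹) g := by
  rw [Fx]
  show B * B * g⁻¹ * g = g * (B * B * g⁻¹)
  calc B * B * g⁻¹ * g = B * B := by group
    _ = g * (B * B) * g⁻¹ := by rw [hgB2.eq]; group
    _ = g * (B * B * g⁻¹) := by group

lemma hxy : (B * U * B⁻¹ * V⁻¹) * (B⁻¹ * V * B * U⁻¹) = g⁻¹ * g⁻¹ := by
  rw [Fx, Fy]
  calc B * B * g⁻¹ * (B⁻¹ * g * B⁻¹)
      = B * B * (g⁻¹ * B⁻¹) * (g * B⁻¹) := by group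
    _ = B * B * (B⁻¹ * g) * (B⁻¹ * g⁻¹) := by rw [c4, c3]
    _ = (B * g) * (B⁻¹ * g⁻¹) := by group
    _ = (g⁻¹ * B) * (B⁻¹ * g⁻¹) := by rw [← F1']
    _ = g⁻¹ * g⁻¹ := by group

lemma gH : g ∈ H :=
  mul_mem (Subgroup.subset_closure (Set.mem_insert _ _))
    (inv_mem (Subgroup.subset_closure (Set.mem_insert_of_mem _ rfl)))

end MemHAux

open MemHAux in
/-- For every natural number n, the element (bub⁻¹v⁻¹)ⁿ(b⁻¹vbu⁻¹)ⁿ of G lies in H. -/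
theorem mem_H :
    ∀ n : ℕ,
      (PresentedGroup.of GenG.b * PresentedGroup.of GenG.u *
          (PresentedGroup.of GenG.b)⁻¹ * (PresentedGroup.of GenG.v)⁻¹) ^ n *
        ((PresentedGroup.of GenG.b)⁻¹ * PresentedGroup.of GenG.v *
          PresentedGroup.of GenG.b * (PresentedGroup.of GenG.u)⁻¹) ^ n ∈ H := by
  have key : ∀ n : ℕ,
      (B * U * B⁻¹ * V⁻¹) ^ n * (B⁻¹ * V * B * U⁻¹) ^ n = (g⁻¹ * g⁻¹) ^ n := by
    intro n
    induction n with
    | zero => simp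
    | succ n ih =>
      have hc : Commute (B * U * B⁻¹ * V⁻¹) ((g⁻¹ * g⁻¹) ^ n) :=
        ((hxg.inv_right.mul_right hxg.inv_right)).pow_right n
      calc (B * U * B⁻¹ * V⁻¹) ^ (n + 1) * (B⁻¹ * V * B * U⁻¹) ^ (n + 1)
          = (B * U * B⁻¹ * V⁻¹) *
            ((B * U * B⁻¹ * V⁻¹) ^ n * (B⁻¹ * V * B * U⁻¹) ^ n) *
            (B⁻¹ * V * B * U⁻¹) := by
              rw [pow_succ' (B * U * B⁻¹ * V⁻¹), pow_succ (B⁻¹ * V * B * U⁻¹)]; group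
        _ = (B * U * B⁻¹ * V⁻¹) * (g⁻¹ * g⁻¹) ^ n * (B⁻¹ * V * B * U⁻¹) := by
              rw [ih]
        _ = (g⁻¹ * g⁻¹) ^ n * ((B * U * B⁻¹ * V⁻¹) * (B⁻¹ * V * B * U⁻¹)) := by
              rw [hc.eq]; group
        _ = (g⁻¹ * g⁻¹) ^ n * (g⁻¹ * g⁻¹) := by rw [hxy]
        _ = (g⁻¹ * g⁻¹) ^ (n + 1) := by rw [pow_succ]
  intro n
  rw [key n]
  exact pow_mem (mul_mem (inv_mem gH) (inv_mem gH)) n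
end

section
/- Let G be the group defined by the presentation ⟨u,v,b,r | u²=v², bvbu=b⁻¹ub⁻¹v, u⁻¹b⁻¹vbr=ru⁻¹b⁻¹vb⟩ and let H be the subgroup of G generated by u² and bvbu. Then for every natural number n, the right cosets H·(bub⁻¹v⁻¹)ⁿ and H·b²ⁿ of H in G coincide; equivalently, (bub⁻¹v⁻¹)ⁿ·b⁻²ⁿ ∈ H. -/
open scoped Pointwise

/-- For every natural number n, the right cosets H·(bub⁻¹v⁻¹)ⁿ and H·b²ⁿ of H in G
coincide (a right coset H·g being the set `MulOpposite.op g • (H : Set G)`);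
equivalently, (bub⁻¹v⁻¹)ⁿ · b⁻²ⁿ ∈ H. -/
theorem coset_representative :
    ∀ n : ℕ,
      MulOpposite.op (((PresentedGroup.of GenG.b * PresentedGroup.of GenG.u *
          (PresentedGroup.of GenG.b)⁻¹ * (PresentedGroup.of GenG.v)⁻¹) ^ n :
            PresentedGroup relsG)) • (H : Set (PresentedGroup relsG)) =
        MulOpposite.op ((PresentedGroup.of GenG.b ^ (2 * n) : PresentedGroup relsG)) •
          (H : Set (PresentedGroup relsG)) ∧
      (PresentedGroup.of GenG.b * PresentedGroup.of GenG.u *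
          (PresentedGroup.of GenG.b)⁻¹ * (PresentedGroup.of GenG.v)⁻¹) ^ n *
        (PresentedGroup.of GenG.b ^ (2 * n))⁻¹ ∈ H := by
  intro n
  set u : PresentedGroup relsG := PresentedGroup.of GenG.u with hu
  set v : PresentedGroup relsG := PresentedGroup.of GenG.v with hv
  set b : PresentedGroup relsG := PresentedGroup.of GenG.b with hb
  -- relators map to 1
  have relone : ∀ w ∈ relsG, PresentedGroup.mk relsG w = 1 := by
    intro w hw
    exact (QuotientGroup.eq_one_iff w).mpr (Subgroup.subset_normalClosure hw)
  have rel1 : u ^ 2 = v ^ 2 := by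
    have h := relone _ (show (FreeGroup.of GenG.u ^ 2 *
        (FreeGroup.of GenG.v ^ 2)⁻¹) ∈ relsG by left; rfl)
    simp only [map_mul, map_inv, map_pow] at h
    have : (PresentedGroup.mk relsG (FreeGroup.of GenG.u)) ^ 2 *
        ((PresentedGroup.mk relsG (FreeGroup.of GenG.v)) ^ 2)⁻¹ = 1 := h
    rw [mul_inv_eq_one] at this
    exact this
  have rel2 : b * v * b * u = b⁻¹ * u * b⁻¹ * v := by
    have h := relone _ (show (FreeGroup.of GenG.b * FreeGroup.of GenG.v * FreeGroup.of GenG.b *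
        FreeGroup.of GenG.u * ((FreeGroup.of GenG.b)⁻¹ * FreeGroup.of GenG.u *
        (FreeGroup.of GenG.b)⁻¹ * FreeGroup.of GenG.v)⁻¹) ∈ relsG by
      right; left; rfl)
    simp only [map_mul, map_inv] at h
    rw [mul_inv_eq_one] at h
    exact h
  -- k = h₂ * h₁⁻¹ ; also k = b⁻¹ u b⁻¹ v⁻¹
  have hk2 : h₂ * h₁⁻¹ = b * v * b * u⁻¹ := by
    show (PresentedGroup.of GenG.b * PresentedGroup.of GenG.v * PresentedGroup.of GenG.b *
      PresentedGroup.of GenG.u) * (PresentedGroup.of GenG.u ^ 2)⁻¹ = _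
    rw [← hu, ← hv, ← hb]
    group
  clear_value u v b
  have kalt : b * v * b * u⁻¹ = b⁻¹ * u * b⁻¹ * v⁻¹ := by
    have e1 : b * v * b * u⁻¹ = (b * v * b * u) * (u ^ 2)⁻¹ := by group; try simp [zpow_ofNat, pow_succ, mul_assoc]
    rw [e1, rel2, rel1]
    group
  -- x = b² k
  have hx : b * u * b⁻¹ * v⁻¹ = b ^ 2 * (b * v * b * u⁻¹) := by
    have e1 : u * b⁻¹ * v = b * (b * v * b * u) := by rw [rel2]; group
    have e2 : b * u * b⁻¹ * v⁻¹ = b * (u * b⁻¹ * v) * (v ^ 2)⁻¹ := by group; try simp [zpow_ofNat, pow_succ, mul_assoc]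
    rw [e2, e1, ← rel1]
    group
    try simp [zpow_ofNat, pow_succ, mul_assoc]
  -- k commutes with b²
  have hcomm : Commute (b * v * b * u⁻¹) (b ^ 2) := by
    have e3 : b ^ 2 * (b * v * b * u⁻¹) = b ^ 2 * (b⁻¹ * u * b⁻¹ * v⁻¹) := by rw [kalt]
    have e4 : (b * v * b * u⁻¹) * b ^ 2 = b * (v * b * u⁻¹ * b ^ 2) := by group; try simp [zpow_ofNat, pow_succ, mul_assoc]
    have e5 : v * b * u⁻¹ * b ^ 2 = v ^ 2 * (v⁻¹ * b * u⁻¹ * b) * b := by group; try simp [zpow_ofNat, pow_succ, mul_assoc]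
    have e6 : v⁻¹ * b * u⁻¹ * b = (b⁻¹ * u * b⁻¹ * v)⁻¹ := by group; try simp [zpow_ofNat, pow_succ, mul_assoc]
    show (b * v * b * u⁻¹) * b ^ 2 = b ^ 2 * (b * v * b * u⁻¹)
    rw [e3, e4, e5, e6, ← rel2, ← rel1]
    group
    try simp [zpow_ofNat, pow_succ, mul_assoc]
  -- main membership
  have hkmem : b * v * b * u⁻¹ ∈ H := by
    rw [← hk2]
    exact mul_mem (Subgroup.subset_closure (by right; rfl))
      (inv_mem (Subgroup.subset_closure (by left; rfl)))
  have hxn : (b * u * b⁻¹ * v⁻¹) ^ n = (b * v * b * u⁻¹) ^ n * b ^ (2 * n) := by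
    rw [hx, ← hcomm.eq, hcomm.mul_pow, ← pow_mul]
  have hmem : (b * u * b⁻¹ * v⁻¹) ^ n * (b ^ (2 * n))⁻¹ ∈ H := by
    rw [hxn, mul_assoc, mul_inv_cancel, mul_one]
    exact pow_mem hkmem n
  refine ⟨?_, hmem⟩
  rw [rightCoset_eq_iff]
  have : b ^ (2 * n) * ((b * u * b⁻¹ * v⁻¹) ^ n)⁻¹ =
      ((b * u * b⁻¹ * v⁻¹) ^ n * (b ^ (2 * n))⁻¹)⁻¹ := by group; try simp [zpow_ofNat, pow_succ, mul_assoc]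
  rw [this]
  exact inv_mem hmem
end
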